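/- Let R = ℝ[z, z̄] be the polynomial ring in two commuting formal variables z and z̄, with formal partial derivatives ∂_z, ∂_{z̄}. Define ℝ-linear operators A, B : R → R by A f = 2·z̄·f − (1/π)·∂_z f and B f = 2·z·f − (1/π)·∂_{z̄} f, and for nonnegative integers a, b set F_{a,b} = A^a ( B^b (1) ) ∈ R. If b > a ≥ 0, then every monomial z̄^α z^β occurring in F_{a,b} with nonzero coefficient satisfies β − α ≥ b − a; in particular β > α for every such monomial. -/

import Mathlib

open MvPolynomial

lemma coeff_pderiv' (i : Fin 2) (f : MvPolynomial (Fin 2) ℝ) (m : Fin 2 →₀ ℕ) :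
    coeff m (pderiv i f) = (m i + 1 : ℝ) * coeff (m + Finsupp.single i 1) f := by
  induction f using MvPolynomial.induction_on' with
  | monomial s a =>
      rw [pderiv_monomial, coeff_monomial, coeff_monomial]
      split_ifs with h1 h2 h2
      · subst h2
        simp [Finsupp.add_apply]
        ring
      · -- h1 : s - single i 1 = m, ¬ s = m + single i 1, need a * s i = 0
        have hsi : s i = 0 := by
          by_contra hne
          apply h2
          ext j
          rcases eq_or_ne j i with rfl | hj
          · have := congrArg (fun g => g j) h1
            simp at this
            simp [Finsupp.add_apply]
            omega
          · have := congrArg (fun g => g j) h1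
            simp [Finsupp.single_apply, hj.symm] at this ⊢
            omega
        simp [hsi]
      · exfalso; apply h1; subst h2; ext j; simp
      · simp
  | add p q hp hq => simp [coeff_add, hp, hq, mul_add]

lemma supp_sub_cases {f g : MvPolynomial (Fin 2) ℝ} {m : Fin 2 →₀ ℕ}
    (hm : m ∈ (f - g).support) : coeff m f ≠ 0 ∨ coeff m g ≠ 0 := by
  rw [mem_support_iff, coeff_sub] at hm
  by_contra hc
  push_neg at hc
  simp [hc.1, hc.2] at hm

lemma two_mul_X_supp {i : Fin 2} {f : MvPolynomial (Fin 2) ℝ} {m : Fin 2 →₀ ℕ}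
    (h : coeff m (2 * X i * f) ≠ 0) :
    m i ≠ 0 ∧ (m - Finsupp.single i 1) ∈ f.support := by
  have h2 : (2 : MvPolynomial (Fin 2) ℝ) * X i * f = C 2 * (X i * f) := by
    rw [mul_assoc]; congr 1
  rw [h2, coeff_C_mul, coeff_X_mul'] at h
  split_ifs at h with hi
  · refine ⟨by simpa [Finsupp.mem_support_iff] using hi, ?_⟩
    rw [mem_support_iff]
    intro hz; rw [hz] at h; simp at h
  · simp at h

lemma pderiv_supp {i : Fin 2} {c : ℝ} {f : MvPolynomial (Fin 2) ℝ} {m : Fin 2 →₀ ℕ}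
    (h : coeff m (C c * pderiv i f) ≠ 0) :
    (m + Finsupp.single i 1) ∈ f.support := by
  rw [coeff_C_mul, coeff_pderiv'] at h
  rw [mem_support_iff]
  intro hz; rw [hz] at h; simp at h

lemma stepB {f : MvPolynomial (Fin 2) ℝ} {k : ℕ}
    (h : ∀ m ∈ f.support, m 1 + k ≤ m 0) :
    ∀ m ∈ (2 * X 0 * f - C (1 / Real.pi) * pderiv 1 f).support, m 1 + (k + 1) ≤ m 0 := by
  intro m hm
  rcases supp_sub_cases hm with h1 | h1
  · obtain ⟨hi, hs⟩ := two_mul_X_supp h1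
    have := h _ hs
    simp [Finsupp.tsub_apply, Finsupp.single_apply] at this
    omega
  · have := h _ (pderiv_supp h1)
    simp [Finsupp.add_apply, Finsupp.single_apply] at this
    omega

lemma stepA {f : MvPolynomial (Fin 2) ℝ} {k : ℕ}
    (h : ∀ m ∈ f.support, m 1 + (k + 1) ≤ m 0) :
    ∀ m ∈ (2 * X 1 * f - C (1 / Real.pi) * pderiv 0 f).support, m 1 + k ≤ m 0 := by
  intro m hm
  rcases supp_sub_cases hm with h1 | h1
  · obtain ⟨hi, hs⟩ := two_mul_X_supp h1
    have := h _ hs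
    simp [Finsupp.tsub_apply, Finsupp.single_apply] at this
    omega
  · have := h _ (pderiv_supp h1)
    simp [Finsupp.add_apply, Finsupp.single_apply] at this
    omega

/-- With `A f = 2z̄f − π⁻¹∂_z f` and `B f = 2zf − π⁻¹∂_{z̄} f` on `ℝ[z, z̄]`
(variable `0` is `z`, variable `1` is `z̄`) and `F_{a,b} = A^a(B^b 1)`, if `b > a`
then every monomial `z̄^α z^β` of `F_{a,b}` satisfies `β − α ≥ b − a`; in particular
`β > α`. -/
theorem stmt_11 (A B : MvPolynomial (Fin 2) ℝ → MvPolynomial (Fin 2) ℝ)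
    (hA : ∀ f, A f = 2 * X 1 * f - C (1 / Real.pi) * pderiv 0 f)
    (hB : ∀ f, B f = 2 * X 0 * f - C (1 / Real.pi) * pderiv 1 f)
    (a b : ℕ) (hab : a < b) :
    ∀ m ∈ (A^[a] (B^[b] (1 : MvPolynomial (Fin 2) ℝ))).support,
      m 1 + (b - a) ≤ m 0 ∧ m 1 < m 0 := by
  have hBn : ∀ n, ∀ m ∈ (B^[n] (1 : MvPolynomial (Fin 2) ℝ)).support, m 1 + n ≤ m 0 := by
    intro n
    induction n with
    | zero =>
        intro m hm
        simp only [Function.iterate_zero, id] at hm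
        rw [mem_support_iff, coeff_one] at hm
        have h0 : m = 0 := by by_contra hne; simp [hne, Ne.symm hne] at hm
        simp [h0]
    | succ n ih =>
        intro m hm
        rw [Function.iterate_succ_apply', hB] at hm
        exact stepB ih m hm
  have hAn : ∀ n k (f : MvPolynomial (Fin 2) ℝ),
      (∀ m ∈ f.support, m 1 + (k + n) ≤ m 0) → ∀ m ∈ (A^[n] f).support, m 1 + k ≤ m 0 := by
    intro n
    induction n with
    | zero => intro k f h; simpa using h
    | succ n ih =>
        intro k f h m hm
        rw [Function.iterate_succ_apply] at hm
        refine ih k (A f) ?_ m hm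
        rw [hA]
        have h' : ∀ m ∈ f.support, m 1 + ((k + n) + 1) ≤ m 0 := by
          intro m hm; have := h m hm; omega
        exact stepA h'
  intro m hm
  have key : m 1 + (b - a) ≤ m 0 := by
    refine hAn a (b - a) _ ?_ m hm
    have : b - a + a = b := by omega
    rw [this]
    exact hBn b
  exact ⟨key, by omega⟩
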